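/- arXiv:2405.19457 — 4 statements merged into one kernel-verified Lean document; each statement's English description precedes it below -/
import Mathlib

section
/- Genuine Advance (Theorem 5.9 core): Let n, t be naturals with n > 3t and B ⊆ Fin n with |B| ≤ t. Let g1, g2 : Fin n → Option ℕ be two partial witness-timestamp vectors whose domains D1 = {i | g1 i ≠ none} and D2 = {i | g2 i ≠ none} satisfy |D1| ≥ n − t and |D2| ≥ n − t. Suppose (i) for every i ∈ D1 ∩ D2, if g1 i = some v and g2 i = some w then v ≤ w, and (ii) for every i ∈ D1 ∩ D2 with i ∉ B, g1 i ≠ g2 i. Then there exists an index i ∉ B with i ∈ D1 ∩ D2 such that g1 i = some v, g2 i = some w, and v < w. -/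
/-- Genuine Advance, core of Theorem 5.9: with `n > 3t` and at most `t`
Byzantine readers `B`, for two partial witness-timestamp vectors `g1, g2` defined on at
least `n - t` indices each, if `g2` dominates `g1` on their common domain and correct
readers' entries differ on the common domain, then some correct reader's timestamp
strictly increases from `g1` to `g2`. -/
theorem genuine_advance (n t : ℕ) (hnt : n > 3 * t)
    (B : Finset (Fin n)) (hB : B.card ≤ t)
    (g1 g2 : Fin n → Option ℕ)
    (D1 : Finset (Fin n)) (hD1 : D1 = Finset.univ.filter (fun i => g1 i ≠ none))
    (D2 : Finset (Fin n)) (hD2 : D2 = Finset.univ.filter (fun i => g2 i ≠ none))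
    (hcard1 : D1.card ≥ n - t) (hcard2 : D2.card ≥ n - t)
    (hle : ∀ i ∈ D1 ∩ D2, ∀ v w, g1 i = some v → g2 i = some w → v ≤ w)
    (hne : ∀ i ∈ D1 ∩ D2, i ∉ B → g1 i ≠ g2 i) :
    ∃ i, i ∉ B ∧ i ∈ D1 ∩ D2 ∧ ∃ v w, g1 i = some v ∧ g2 i = some w ∧ v < w := by
  -- |D1 ∩ D2| ≥ n - 2t > t ≥ |B|
  have hunion : (D1 ∪ D2).card ≤ n := by
    simpa using (Finset.card_le_card (Finset.subset_univ (D1 ∪ D2))).trans_eq (Finset.card_fin n)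
  have hinter : (D1 ∩ D2).card > B.card := by
    have h := Finset.card_union_add_card_inter D1 D2
    omega
  have : ¬ (D1 ∩ D2 ⊆ B) := fun h => absurd (Finset.card_le_card h) (not_le.mpr hinter)
  obtain ⟨i, hiI, hiB⟩ := Finset.not_subset.mp this
  have hi1 : i ∈ D1 := (Finset.mem_inter.mp hiI).1
  have hi2 : i ∈ D2 := (Finset.mem_inter.mp hiI).2
  rw [hD1, Finset.mem_filter] at hi1
  rw [hD2, Finset.mem_filter] at hi2
  obtain ⟨v, hv⟩ := Option.ne_none_iff_exists'.mp hi1.2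
  obtain ⟨w, hw⟩ := Option.ne_none_iff_exists'.mp hi2.2
  refine ⟨i, hiB, hiI, v, w, hv, hw, ?_⟩
  have hvw := hle i hiI v w hv hw
  have hneq := hne i hiI hiB
  rw [hv, hw] at hneq
  have : v ≠ w := fun h => hneq (by rw [h])
  omega
end

section
/- The consistent timestamps form a sublattice: Fix n and a set S of vector timestamps in Fin n → ℕ. Call T : Fin n → ℕ consistent if there is no s ∈ S such that (∃ i, T i < s i) and (∃ j, s j < T j). Then the set of consistent timestamps is closed under pointwise maximum and pointwise minimum: if T1 and T2 are consistent, so are (fun i => max (T1 i) (T2 i)) and (fun i => min (T1 i) (T2 i)). -/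
/-- A vector timestamp `T` is consistent with respect to a set `S` of vector timestamps
if it is concurrent with no element of `S`. -/
def Consistent {n : ℕ} (S : Set (Fin n → ℕ)) (T : Fin n → ℕ) : Prop :=
  ¬ ∃ s ∈ S, (∃ i, T i < s i) ∧ (∃ j, s j < T j)

/-- The consistent timestamps are closed under pointwise maximum and
pointwise minimum (they form a sublattice). -/
theorem consistent_sublattice {n : ℕ} (S : Set (Fin n → ℕ)) (T1 T2 : Fin n → ℕ)
    (h1 : Consistent S T1) (h2 : Consistent S T2) :
    Consistent S (fun i => max (T1 i) (T2 i)) ∧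
      Consistent S (fun i => min (T1 i) (T2 i)) := by
  constructor
  · rintro ⟨s, hs, ⟨i, hi⟩, ⟨j, hj⟩⟩
    simp only [max_lt_iff, lt_max_iff] at hi hj
    rcases hj with hj | hj
    · exact h1 ⟨s, hs, ⟨i, hi.1⟩, ⟨j, hj⟩⟩
    · exact h2 ⟨s, hs, ⟨i, hi.2⟩, ⟨j, hj⟩⟩
  · rintro ⟨s, hs, ⟨i, hi⟩, ⟨j, hj⟩⟩
    simp only [min_lt_iff, lt_min_iff] at hi hj
    rcases hi with hi | hi
    · exact h1 ⟨s, hs, ⟨i, hi⟩, ⟨j, hj.1⟩⟩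
    · exact h2 ⟨s, hs, ⟨i, hi⟩, ⟨j, hj.2⟩⟩
end

section
/- Chain of completions (Theorem 5.17, isomorphism of (𝒯̄,↦) and (𝒯^f,<)): Let g : ℕ → (Fin n → Option ℕ) be a sequence of partial timestamp vectors and define full vectors f : ℕ → (Fin n → ℕ) recursively by f 0 i = (g 0 i).getD 0 and f (k+1) i = (g (k+1) i).getD (f k i). Suppose for every k: (i) for all i and v, g (k+1) i = some v implies f k i ≤ v, and (ii) there exist i and v with g (k+1) i = some v and f k i < v. Then f is strictly monotone with respect to the pointwise strict order: for all j < k, f j ≤ f k pointwise and f j ≠ f k. Consequently f is injective and the set { f k | k ∈ ℕ } is totally ordered under the pointwise order. -/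
/-- Chain of completions, Theorem 5.17: the recursive completions of a
`↦`-increasing sequence of partial timestamps form a strictly increasing chain of full
timestamps; consequently the completion map is injective and its range is totally
ordered under the pointwise order. -/
theorem chain_of_completions {n : ℕ}
    (g : ℕ → (Fin n → Option ℕ)) (f : ℕ → (Fin n → ℕ))
    (hf0 : ∀ i, f 0 i = (g 0 i).getD 0)
    (hfs : ∀ k i, f (k + 1) i = (g (k + 1) i).getD (f k i))
    (hdom : ∀ k i v, g (k + 1) i = some v → f k i ≤ v)
    (hstrict : ∀ k, ∃ i v, g (k + 1) i = some v ∧ f k i < v) :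
    (∀ j k, j < k → (∀ i, f j i ≤ f k i) ∧ f j ≠ f k) ∧
      Function.Injective f ∧
      (∀ a b : ℕ, (∀ i, f a i ≤ f b i) ∨ (∀ i, f b i ≤ f a i)) := by
  have step : ∀ k i, f k i ≤ f (k + 1) i := by
    intro k i
    rw [hfs]
    cases h : g (k + 1) i with
    | none => simp
    | some v => simpa using hdom k i v h
  have hmono : ∀ j k, j ≤ k → ∀ i, f j i ≤ f k i := by
    intro j k h
    induction k with
    | zero => obtain rfl : j = 0 := Nat.le_zero.mp h; intro i; exact le_rfl
    | succ m ih =>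
      rcases Nat.le_succ_iff.mp h with h' | h'
      · intro i; exact le_trans (ih h' i) (step m i)
      · subst h'; intro i; exact le_rfl
  have hlt : ∀ j k, j < k → (∀ i, f j i ≤ f k i) ∧ f j ≠ f k := by
    intro j k h
    refine ⟨hmono j k h.le, ?_⟩
    obtain ⟨i, v, hg, hv⟩ := hstrict j
    have h1 : f (j + 1) i = v := by rw [hfs, hg]; rfl
    have h2 : f (j + 1) i ≤ f k i := hmono _ _ h i
    intro heq
    have := congrFun heq i
    omega
  refine ⟨hlt, ?_, ?_⟩
  · intro a b hab
    by_contra hne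
    rcases Nat.lt_or_ge a b with h | h
    · exact (hlt a b h).2 hab
    · exact (hlt b a (lt_of_le_of_ne h (Ne.symm hne))).2 hab.symm
  · intro a b
    rcases Nat.le_total a b with h | h
    · exact Or.inl (hmono a b h)
    · exact Or.inr (hmono b a h)
end

section
/- Monotonicity and Genuine Advance of completed timestamps (Theorem 5.16): Let n, t be naturals with n > 3t and B ⊆ Fin n with |B| ≤ t. Let g : ℕ → (Fin n → Option ℕ) be a sequence of partial timestamp vectors such that each domain D k = { i | g k i ≠ none } satisfies |D k| ≥ n − t. Define full vectors f : ℕ → (Fin n → ℕ) by f 0 i = (g 0 i).getD 0 and f (k+1) i = (g (k+1) i).getD (f k i). Suppose for every k: (i) for all i and v, g (k+1) i = some v implies f k i ≤ v, and (ii) for every i ∉ B with i ∈ D k ∩ D (k+1), g k i ≠ g (k+1) i. Then for every k there exists an index i ∉ B with f k i < f (k+1) i; moreover f k ≤ f (k+1) pointwise for every k, so f is strictly monotone and the set { f k | k ∈ ℕ } is totally ordered under the pointwise order. -/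
/-- Theorem 5.16, Monotonicity and Genuine Advance of completed
timestamps: with `n > 3t` and at most `t` Byzantine readers `B`, if each partial
timestamp in the sequence `g` is defined on at least `n - t` indices, successive
partial timestamps dominate the previous completion, and correct readers' entries
differ between successive partial timestamps on their common domains, then each step
of the recursive completion `f` strictly advances at some correct reader's index,
`f` is pointwise monotone, strictly monotone, and its values form a chain. -/
theorem monotonicity_and_genuine_advance (n t : ℕ) (hnt : n > 3 * t)
    (B : Finset (Fin n)) (hB : B.card ≤ t)
    (g : ℕ → (Fin n → Option ℕ))
    (D : ℕ → Finset (Fin n))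
    (hD : ∀ k, D k = Finset.univ.filter (fun i => g k i ≠ none))
    (hcard : ∀ k, (D k).card ≥ n - t)
    (f : ℕ → (Fin n → ℕ))
    (hf0 : ∀ i, f 0 i = (g 0 i).getD 0)
    (hfs : ∀ k i, f (k + 1) i = (g (k + 1) i).getD (f k i))
    (hdom : ∀ k i v, g (k + 1) i = some v → f k i ≤ v)
    (hne : ∀ k i, i ∉ B → i ∈ D k ∩ D (k + 1) → g k i ≠ g (k + 1) i) :
    (∀ k, ∃ i, i ∉ B ∧ f k i < f (k + 1) i) ∧
      (∀ k i, f k i ≤ f (k + 1) i) ∧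
      (∀ j k, j < k → (∀ i, f j i ≤ f k i) ∧ f j ≠ f k) ∧
      (∀ a b : ℕ, (∀ i, f a i ≤ f b i) ∨ (∀ i, f b i ≤ f a i)) := by
  -- g is `some (f k i)` on the domain
  have gsome : ∀ k i, i ∈ D k → g k i = some (f k i) := by
    intro k i hi
    rw [hD k, Finset.mem_filter] at hi
    obtain ⟨v, hv⟩ := Option.ne_none_iff_exists'.mp hi.2
    cases k with
    | zero => rw [hf0 i, hv]; rfl
    | succ m => rw [hfs m i, hv]; rfl
  have hmono : ∀ k i, f k i ≤ f (k + 1) i := by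
    intro k i
    rw [hfs k i]
    cases h : g (k + 1) i with
    | none => simp
    | some v => simpa using hdom k i v h
  have hadv : ∀ k, ∃ i, i ∉ B ∧ f k i < f (k + 1) i := by
    intro k
    have hcap : ((D k ∩ D (k + 1)) \ B).Nonempty := by
      rw [← Finset.card_pos]
      have h1 := Finset.card_inter_add_card_union (D k) (D (k + 1))
      have h2 : (D k ∪ D (k + 1)).card ≤ n := by
        simpa using Finset.card_le_card (Finset.subset_univ (D k ∪ D (k + 1)))
      have h3 : (D k ∩ D (k + 1)).card ≤ ((D k ∩ D (k + 1)) \ B).card + B.card :=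
        Finset.card_le_card_sdiff_add_card
      have h4 := hcard k
      have h5 := hcard (k + 1)
      omega
    obtain ⟨i, hi⟩ := hcap
    rw [Finset.mem_sdiff] at hi
    refine ⟨i, hi.2, ?_⟩
    have hk := gsome k i (Finset.mem_inter.mp hi.1).1
    have hk1 := gsome (k + 1) i (Finset.mem_inter.mp hi.1).2
    have hle := hdom k i _ hk1
    have hne' := hne k i hi.2 hi.1
    rw [hk, hk1] at hne'
    exact lt_of_le_of_ne hle (by simpa using hne')
  have hle : ∀ j k, j ≤ k → ∀ i, f j i ≤ f k i := by
    intro j k hjk i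
    induction k, hjk using Nat.le_induction with
    | base => exact le_rfl
    | succ m hm ih => exact le_trans ih (hmono m i)
  refine ⟨hadv, hmono, ?_, ?_⟩
  · intro j k hjk
    refine ⟨hle j k (le_of_lt hjk), ?_⟩
    obtain ⟨i, _, hlt⟩ := hadv j
    intro heq
    have := hle (j + 1) k hjk i
    have : f j i < f k i := lt_of_lt_of_le hlt this
    rw [heq] at this
    exact lt_irrefl _ this
  · intro a b
    rcases le_total a b with h | h
    · exact Or.inl (hle a b h)
    · exact Or.inr (hle b a h)
end
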